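/- Let Q be a symmetric real N×N matrix, S a symmetric real K×K matrix, C a real K×N matrix, U a real N×K matrix, and V = U S. Then trace(S U^T Q U + 2 C U) = trace(𝓛 W_U), where 𝓛 is the (2N+K)×(2N+K) symmetric block matrix with blocks 𝓛 = [[0, C, 0], [C^T, 0, (1/2)Q], [0, (1/2)Q, 0]] and W_U is the (2N+K)×(2N+K) block matrix W_U = [[I_K, U^T, V^T], [U, U U^T, U V^T], [V, V U^T, V V^T]]. -/

import Mathlib

open Matrix

/-- The `(2N+K) × (2N+K)` block matrix `𝓛 = [[0, C, 0], [Cᵀ, 0, ½Q], [0, ½Q, 0]]`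
with block sizes `K, N, N`. -/
noncomputable def Lmat {N K : ℕ} (Q : Matrix (Fin N) (Fin N) ℝ)
    (C : Matrix (Fin K) (Fin N) ℝ) :
    Matrix (Fin K ⊕ (Fin N ⊕ Fin N)) (Fin K ⊕ (Fin N ⊕ Fin N)) ℝ :=
  Matrix.fromBlocks 0 (Matrix.fromCols C 0) (Matrix.fromRows Cᵀ 0)
    (Matrix.fromBlocks 0 ((1 / 2 : ℝ) • Q) ((1 / 2 : ℝ) • Q) 0)

/-- The `(2N+K) × (2N+K)` block matrix
`W_U = [[I_K, Uᵀ, Vᵀ], [U, UUᵀ, UVᵀ], [V, VUᵀ, VVᵀ]]` with block sizes `K, N, N`. -/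
noncomputable def Wmat {N K : ℕ} (U V : Matrix (Fin N) (Fin K) ℝ) :
    Matrix (Fin K ⊕ (Fin N ⊕ Fin N)) (Fin K ⊕ (Fin N ⊕ Fin N)) ℝ :=
  Matrix.fromBlocks 1 (Matrix.fromCols Uᵀ Vᵀ) (Matrix.fromRows U V)
    (Matrix.fromBlocks (U * Uᵀ) (U * Vᵀ) (V * Uᵀ) (V * Vᵀ))

lemma trace_fromBlocks' {m n R : Type*} [Fintype m] [Fintype n] [AddCommMonoid R]
    (A : Matrix m m R) (B : Matrix m n R) (C : Matrix n m R) (D : Matrix n n R) :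
    (Matrix.fromBlocks A B C D).trace = A.trace + D.trace := by
  simp [Matrix.trace, Matrix.diag, Fintype.sum_sum_type]

lemma cyc_aux {N K : ℕ} (Q : Matrix (Fin N) (Fin N) ℝ) (S : Matrix (Fin K) (Fin K) ℝ)
    (U : Matrix (Fin N) (Fin K) ℝ) :
    (Q * U * S * Uᵀ).trace = (S * Uᵀ * Q * U).trace := by
  rw [Matrix.trace_mul_cycle, Matrix.trace_mul_cycle,
    show S * Uᵀ * (Q * U) = S * Uᵀ * Q * U by simp [Matrix.mul_assoc]]

/-- for symmetric `Q`, symmetric `S`, any `C`, any `U`, and `V = U S`,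
`trace(S Uᵀ Q U + 2 C U) = trace(𝓛 W_U)`. -/
theorem stmt_6 (N K : ℕ) (Q : Matrix (Fin N) (Fin N) ℝ) (hQ : Q.IsSymm)
    (S : Matrix (Fin K) (Fin K) ℝ) (hS : S.IsSymm)
    (C : Matrix (Fin K) (Fin N) ℝ) (U : Matrix (Fin N) (Fin K) ℝ)
    (V : Matrix (Fin N) (Fin K) ℝ) (hV : V = U * S) :
    Matrix.trace (S * Uᵀ * Q * U + (2 : ℝ) • (C * U)) =
      Matrix.trace (Lmat Q C * Wmat U V) := by
  subst hV
  rw [Lmat, Wmat]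
  simp only [Matrix.fromBlocks_multiply, Matrix.fromCols_mul_fromRows,
    Matrix.fromRows_mul_fromCols, trace_fromBlocks', Matrix.trace_add,
    Matrix.trace_smul, Matrix.zero_mul, Matrix.mul_zero, zero_add, add_zero,
    Matrix.trace_zero, Matrix.mul_one, Matrix.one_mul, Matrix.smul_mul]
  rw [Matrix.trace_mul_comm Cᵀ, ← Matrix.transpose_mul, Matrix.trace_transpose]
  have key : (Q * (U * S * Uᵀ)).trace = (S * Uᵀ * Q * U).trace := by
    rw [show Q * (U * S * Uᵀ) = Q * U * S * Uᵀ by simp [Matrix.mul_assoc], cyc_aux]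
  have key2 : (Q * (U * (U * S)ᵀ)).trace = (S * Uᵀ * Q * U).trace := by
    rw [Matrix.transpose_mul, hS.eq,
      show Q * (U * (S * Uᵀ)) = Q * U * S * Uᵀ by simp [Matrix.mul_assoc], cyc_aux]
  rw [key, key2]
  simp [smul_eq_mul]
  ring
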